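/- If F is a size function on abelian groups and k = F(ℤ), then F(G) = k · rank(G) for every finitely generated abelian group G. -/

import Mathlib

open scoped DirectSum

/-- The additive equivalence `ℤ^(n+1) ≃+ ℤ × ℤ^n`. -/
def piSuccAddEquiv (n : ℕ) : (Fin (n + 1) → ℤ) ≃+ ℤ × (Fin n → ℤ) :=
  { (Fin.consEquiv (fun _ : Fin (n + 1) => ℤ)).symm with map_add' := fun _ _ => rfl }

/-- The (torsion-free) rank of an abelian group `G`: the supremum of the natural numbers `n`
such that there exists an injective group homomorphism from `ℤ^n` into `G`. -/
noncomputable def rank (G : Type) [AddCommGroup G] : ℕ∞ :=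
  sSup {c : ℕ∞ | ∃ n : ℕ, c = (n : ℕ∞) ∧
    ∃ f : (Fin n → ℤ) →+ G, Function.Injective f}

/-- The rank of a group isomorphic to `ℤ^n × T` with `T` torsion is `n`. -/
lemma rank_eq_of_equiv (G : Type) [AddCommGroup G] (n : ℕ) (T : Type) [AddCommGroup T]
    (hT : ∀ t : T, ∃ k : ℕ, 0 < k ∧ k • t = 0)
    (e : G ≃+ (Fin n → ℤ) × T) : rank G = n := by
  apply le_antisymm
  · apply sSup_le
    rintro c ⟨m, rfl, f, hf⟩
    simp only [Nat.cast_le]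
    set g : (Fin m → ℤ) →+ (Fin n → ℤ) :=
      (AddMonoidHom.fst _ _).comp (e.toAddMonoidHom.comp f) with hg
    have hginj : Function.Injective g := by
      rw [injective_iff_map_eq_zero]
      intro z hz
      obtain ⟨k, hk, hkt⟩ := hT (e (f z)).2
      have hkz : k • z = 0 := by
        apply hf
        apply e.injective
        rw [map_zero, map_zero, map_nsmul, map_nsmul]
        refine Prod.ext ?_ ?_
        · show k • (e (f z)).1 = (0 : Fin n → ℤ)
          have : (e (f z)).1 = 0 := hz
          rw [this, smul_zero]
        · exact hkt
      funext i
      have : (k : ℤ) * z i = 0 := by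
        have := congrFun hkz i
        simpa [nsmul_eq_mul] using this
      have hk' : (k : ℤ) ≠ 0 := Int.natCast_ne_zero.mpr hk.ne'
      exact (mul_eq_zero.mp this).resolve_left hk'
    have := LinearMap.rank_le_of_injective g.toIntLinearMap hginj
    rw [rank_fin_fun, rank_fin_fun] at this
    exact_mod_cast this
  · apply le_sSup
    refine ⟨n, rfl, e.symm.toAddMonoidHom.comp (AddMonoidHom.inl (Fin n → ℤ) T), ?_⟩
    intro a b hab
    have := e.symm.injective hab
    exact congrArg Prod.fst this

/-- If `F` is a size function on abelian groups and `k = F(ℤ)`, then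
`F(G) = k · rank G` for every finitely generated abelian group `G`. -/
theorem size_function_eq_mul_rank_of_fg
    (F : (G : Type) → [AddCommGroup G] → ℕ∞)
    (hiso : ∀ (G H : Type) [AddCommGroup G] [AddCommGroup H], (G ≃+ H) → F G = F H)
    (htor : ∀ (G : Type) [AddCommGroup G],
      (∀ g : G, ∃ n : ℕ, 0 < n ∧ n • g = 0) → F G = 0)
    (hquot : ∀ (G : Type) [AddCommGroup G] (H : AddSubgroup G),
      F H = 0 → F (G ⧸ H) = F G)
    (hsum : ∀ (G₁ G₂ : Type) [AddCommGroup G₁] [AddCommGroup G₂],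
      F (G₁ × G₂) = F G₁ + F G₂)
    (G : Type) [AddCommGroup G] (hfg : AddGroup.FG G) :
    F G = F ℤ * rank G := by
  -- `F (ℤ^n) = n * F ℤ`
  have hpow : ∀ n : ℕ, F (Fin n → ℤ) = n * F ℤ := by
    intro n
    induction n with
    | zero =>
      rw [htor (Fin 0 → ℤ) (fun g => ⟨1, one_pos, by simp [Subsingleton.elim g 0]⟩)]
      simp
    | succ n ih =>
      rw [hiso _ _ (piSuccAddEquiv n), hsum, ih]
      push_cast
      ring
  obtain ⟨n, ι, fι, p, hp, e, ⟨f⟩⟩ := AddCommGroup.equiv_free_prod_directSum_zmod G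
  haveI : ∀ i, NeZero (p i ^ e i) := fun i => ⟨pow_ne_zero _ (hp i).ne_zero⟩
  haveI : DecidableEq ι := Classical.decEq ι
  set T := ⨁ i : ι, ZMod (p i ^ e i) with hTdef
  have hT : ∀ t : T, ∃ k : ℕ, 0 < k ∧ k • t = 0 := by
    intro t
    refine ⟨∏ i, p i ^ e i,
      Finset.prod_pos (fun i _ => pow_pos (hp i).pos _), ?_⟩
    apply DFinsupp.ext
    intro i
    rw [DFinsupp.smul_apply, DFinsupp.zero_apply, nsmul_eq_mul,
      (ZMod.natCast_eq_zero_iff _ _).mpr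
        (Finset.dvd_prod_of_mem _ (Finset.mem_univ i)), zero_mul]
  have f' : G ≃+ (Fin n → ℤ) × T :=
    f.trans (AddEquiv.prodCongr (AddEquiv.mk' Finsupp.equivFunOnFinite fun _ _ => rfl)
      (AddEquiv.refl T))
  have hrank : rank G = n := rank_eq_of_equiv G n T hT f'
  have hFT : F T = 0 := htor T hT
  rw [hiso G _ f', hsum, hpow, hFT, add_zero, hrank, mul_comm]
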